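/- Let n ≥ 3 and let G be a finite prime graph with at least 3 vertices. If there exist three distinct vertices x, y, z such that no chain of length at most n goes from {x,y} to z, then G contains a chain of length n inducing a prime subgraph. -/

import Mathlib

variable {V : Type*}

def GraphModule (G : SimpleGraph V) (X : Set V) : Prop :=
  ∀ v ∉ X, (∀ x ∈ X, G.Adj v x) ∨ (∀ x ∈ X, ¬ G.Adj v x)

def IsPrimeGraph (G : SimpleGraph V) : Prop :=
  ∀ X : Set V, GraphModule G X → X.Subsingleton ∨ X = Set.univ

structure GraphChain (G : SimpleGraph V) (I : Set V) (w : V) (m : ℕ)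
    (v : Fin (m + 1) → V) : Prop where
  two_le : 2 ≤ m
  inj : Function.Injective v
  mem0 : v 0 ∈ I
  mem1 : v 1 ∈ I
  not_mem : ∀ i : Fin (m + 1), 2 ≤ (i : ℕ) → v i ∉ I
  last_eq : v (Fin.last m) = w
  uniq : ∀ i : Fin (m + 1), 0 < (i : ℕ) →
    (∀ j : Fin (m + 1), (j : ℕ) < (i : ℕ) → (G.Adj (v i) (v j) ↔ (j : ℕ) + 1 = (i : ℕ))) ∨
    (∀ j : Fin (m + 1), (j : ℕ) < (i : ℕ) → (¬ G.Adj (v i) (v j) ↔ (j : ℕ) + 1 = (i : ℕ)))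

def HasChain (G : SimpleGraph V) (I : Set V) (w : V) : Prop :=
  ∃ m v, GraphChain G I w m v

/-- ℕ-indexed version of chains, easier to manipulate. -/
structure NChain (G : SimpleGraph V) (I : Set V) (m : ℕ) (f : ℕ → V) : Prop where
  two_le : 2 ≤ m
  inj : ∀ i ≤ m, ∀ j ≤ m, f i = f j → i = j
  mem0 : f 0 ∈ I
  mem1 : f 1 ∈ I
  not_mem : ∀ i, 2 ≤ i → i ≤ m → f i ∉ I
  uniq : ∀ i, 1 ≤ i → i ≤ m →
    (∀ j < i, (G.Adj (f i) (f j) ↔ j + 1 = i)) ∨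
    (∀ j < i, (¬ G.Adj (f i) (f j) ↔ j + 1 = i))

namespace NChain

variable {G : SimpleGraph V} {I : Set V} {m : ℕ} {f : ℕ → V}

lemma pref (h : NChain G I m f) {k : ℕ} (h2 : 2 ≤ k) (hk : k ≤ m) : NChain G I k f :=
  ⟨h2, fun i hi j hj => h.inj i (hi.trans hk) j (hj.trans hk), h.mem0, h.mem1,
   fun i h2i hik => h.not_mem i h2i (hik.trans hk), fun i h1 hik => h.uniq i h1 (hik.trans hk)⟩

lemma split (h : NChain G I m f) {l j : ℕ} (h2 : 2 ≤ l) (hl : l ≤ m) (hj : j + 2 ≤ l) :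
    G.Adj (f l) (f (l - 1)) ↔ ¬ G.Adj (f l) (f j) := by
  rcases h.uniq l (by omega) hl with hb | hb
  · have e1 := hb (l - 1) (by omega)
    have e2 := hb j (by omega)
    exact iff_of_true (e1.mpr (by omega)) (fun ha => absurd (e2.mp ha) (by omega))
  · have e1 := hb (l - 1) (by omega)
    have e2 := hb j (by omega)
    exact iff_of_false (fun ha => absurd (e1.mpr (by omega)) (not_not_intro ha))
      (fun hn => absurd (e2.mp hn) (by omega))

lemma extend (h : NChain G I m f) {z : V} (hz : z ∉ I) (hzne : ∀ i ≤ m, z ≠ f i)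
    (hadj : (G.Adj z (f m) ∧ ∀ j < m, ¬ G.Adj z (f j)) ∨
            (¬ G.Adj z (f m) ∧ ∀ j < m, G.Adj z (f j))) :
    NChain G I (m + 1) (fun i => if i = m + 1 then z else f i) := by
  have h2m := h.two_le
  refine ⟨by omega, ?_, ?_, ?_, ?_, ?_⟩
  · intro i hi j hj hij
    by_cases h1 : i = m + 1 <;> by_cases h2 : j = m + 1
    · omega
    · exfalso; rw [if_pos h1, if_neg h2] at hij; exact (hzne j (by omega)) hij
    · exfalso; rw [if_neg h1, if_pos h2] at hij; exact (hzne i (by omega)) hij.symm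
    · rw [if_neg h1, if_neg h2] at hij; exact h.inj i (by omega) j (by omega) hij
  · rw [if_neg (by omega)]; exact h.mem0
  · rw [if_neg (by omega)]; exact h.mem1
  · intro i h2i hi
    by_cases hie : i = m + 1
    · rw [if_pos hie]; exact hz
    · rw [if_neg hie]; exact h.not_mem i h2i (by omega)
  · intro i h1 hi
    by_cases hie : i = m + 1
    · subst hie
      rcases hadj with ⟨ha, hb⟩ | ⟨ha, hb⟩
      · left; intro j hj
        rw [if_pos rfl, if_neg (by omega)]
        rcases eq_or_lt_of_le (by omega : j ≤ m) with rfl | hlt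
        · exact iff_of_true ha (by omega)
        · exact iff_of_false (hb j hlt) (by omega)
      · right; intro j hj
        rw [if_pos rfl, if_neg (by omega)]
        rcases eq_or_lt_of_le (by omega : j ≤ m) with rfl | hlt
        · exact iff_of_true ha (by omega)
        · exact iff_of_false (not_not_intro (hb j hlt)) (by omega)
    · have him : i ≤ m := by omega
      rcases h.uniq i h1 him with hb | hb
      · left; intro j hj
        rw [if_neg hie, if_neg (by omega)]; exact hb j hj
      · right; intro j hj
        rw [if_neg hie, if_neg (by omega)]; exact hb j hj

lemma toGraphChain (h : NChain G I m f) :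
    GraphChain G I (f m) m (fun i : Fin (m + 1) => f ↑i) := by
  have h2m := h.two_le
  refine ⟨h.two_le, ?_, ?_, ?_, ?_, ?_, ?_⟩
  · intro a b hab
    exact Fin.ext (h.inj _ (Fin.is_le a) _ (Fin.is_le b) hab)
  · simpa using h.mem0
  · have e : ((1 : Fin (m + 1)) : ℕ) = 1 := by
      rw [Fin.val_one']; exact Nat.mod_eq_of_lt (by omega)
    show f ↑(1 : Fin (m + 1)) ∈ I
    rw [e]; exact h.mem1
  · intro i h2i; exact h.not_mem _ h2i (Fin.is_le i)
  · rfl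
  · intro i hi
    rcases h.uniq ↑i hi (Fin.is_le i) with hb | hb
    · exact Or.inl fun j hj => hb ↑j hj
    · exact Or.inr fun j hj => hb ↑j hj

end NChain

lemma base_chain {G : SimpleGraph V} {a b u : V} (hab : a ≠ b) (hua : u ≠ a) (hub : u ≠ b)
    (hadj : (G.Adj u a ∧ ¬ G.Adj u b) ∨ (G.Adj u b ∧ ¬ G.Adj u a)) :
    NChain G {a, b} 2 (fun i => if i = 0 then a else if i = 1 then b else u) := by
  refine ⟨le_rfl, ?_, by simp, by simp, ?_, ?_⟩
  · intro i hi j hj he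
    interval_cases i <;> interval_cases j <;> simp_all
  · intro i h2 hi2
    have : i = 2 := by omega
    subst this
    show u ∉ ({a, b} : Set V)
    simp [Set.mem_insert_iff, hua, hub]
  · intro i h1 hi2
    have : i = 1 ∨ i = 2 := by omega
    rcases this with rfl | rfl
    · by_cases hba : G.Adj b a
      · left; intro j hj
        have hj0 : j = 0 := by omega
        subst hj0
        norm_num
        exact hba
      · right; intro j hj
        have hj0 : j = 0 := by omega
        subst hj0
        norm_num
        exact hba
    · rcases hadj with ⟨h1', h2'⟩ | ⟨h1', h2'⟩
      · right; intro j hj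
        rcases (by omega : j = 0 ∨ j = 1) with rfl | rfl
        · norm_num; exact h1'
        · norm_num; exact h2'
      · left; intro j hj
        rcases (by omega : j = 0 ∨ j = 1) with rfl | rfl
        · norm_num; exact h2'
        · norm_num; exact h1'

lemma lemA {G : SimpleGraph V} {I : Set V} {m : ℕ} {f : ℕ → V} (h : NChain G I m f)
    (hm : 3 ≤ m)
    (hnp : ¬ IsPrimeGraph (G.induce (Set.range (fun i : Fin (m + 1) => f ↑i)))) :
    (G.Adj (f 1) (f 0) ↔ G.Adj (f m) (f 0)) := by
  classical
  set S := Set.range (fun i : Fin (m + 1) => f ↑i) with hS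
  unfold IsPrimeGraph at hnp
  push_neg at hnp
  obtain ⟨Y, hmod, hss, huniv⟩ := hnp
  have hliftmem : ∀ i, i ≤ m → f i ∈ S := by
    intro i hi
    exact ⟨⟨i, by omega⟩, rfl⟩
  let lift : ∀ i, i ≤ m → ↥S := fun i hi => ⟨f i, hliftmem i hi⟩
  let Jn : ℕ → Prop := fun i => ∃ hi : i ≤ m, lift i hi ∈ Y
  have hJle : ∀ i, Jn i → i ≤ m := fun i hi => hi.1
  have uni : ∀ k, k ≤ m → ¬ Jn k → ∀ i j, Jn i → Jn j →
      (G.Adj (f k) (f i) ↔ G.Adj (f k) (f j)) := by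
    intro k hk hkJ i j hi hj
    have hkY : lift k hk ∉ Y := fun hmem => hkJ ⟨hk, hmem⟩
    obtain ⟨hi1, hi2⟩ := hi
    obtain ⟨hj1, hj2⟩ := hj
    rcases hmod (lift k hk) hkY with hall | hall
    · exact iff_of_true (hall _ hi2) (hall _ hj2)
    · exact iff_of_false (hall _ hi2) (hall _ hj2)
  have memJ : ∀ s : ↥S, s ∈ Y → ∃ i, Jn i ∧ f i = (s : V) := by
    intro s hsY
    obtain ⟨i, hi⟩ := s.2
    refine ⟨↑i, ⟨i.is_le, ?_⟩, hi⟩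
    have : lift ↑i i.is_le = s := Subtype.ext hi
    rwa [this]
  have notJ : ∃ k, k ≤ m ∧ ¬ Jn k := by
    obtain ⟨s, hs⟩ := (Set.ne_univ_iff_exists_notMem _).mp huniv
    obtain ⟨i, hi⟩ := s.2
    refine ⟨↑i, i.is_le, fun hJ => ?_⟩
    obtain ⟨h1, h2⟩ := hJ
    have : lift ↑i h1 = s := Subtype.ext hi
    rw [this] at h2
    exact hs h2
  have up : ∀ a b, a < b → Jn a → Jn b → ∀ c, b ≤ c → c ≤ m → Jn c := by
    intro a b hab ha hb c hc
    induction c, hc using Nat.le_induction with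
    | base => exact fun _ => hb
    | succ c hbc ih =>
      intro hcm
      have hcJ : Jn c := ih (by omega)
      by_contra hc1
      have e1 := uni (c + 1) hcm hc1 c a hcJ ha
      have e2 := h.split (l := c + 1) (j := a) (by omega) hcm (by omega)
      rw [show c + 1 - 1 = c from rfl] at e2
      tauto
  obtain ⟨s, hsY, t, htY, hst⟩ := hss
  obtain ⟨a1, ha1, ha1v⟩ := memJ s hsY
  obtain ⟨a2, ha2, ha2v⟩ := memJ t htY
  have ha12 : a1 ≠ a2 := by
    intro he
    exact hst (Subtype.ext (by rw [← ha1v, ← ha2v, he]))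
  have hex : ∃ i, Jn i := ⟨a1, ha1⟩
  have ha0 : Jn (Nat.find hex) := Nat.find_spec hex
  set a0 := Nat.find hex with ha0def
  have hmin : ∀ j, j < a0 → ¬ Jn j := fun j hj => Nat.find_min hex hj
  obtain ⟨b0, hb0, hb0gt⟩ : ∃ b, Jn b ∧ a0 < b := by
    rcases eq_or_ne a1 a0 with he | hne
    · exact ⟨a2, ha2, lt_of_le_of_ne (Nat.find_min' hex ha2) (fun hc => ha12 (by omega))⟩
    · exact ⟨a1, ha1, lt_of_le_of_ne (Nat.find_min' hex ha1) (Ne.symm hne)⟩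
  have hmJ : Jn m := up a0 b0 hb0gt ha0 hb0 m (hJle _ hb0) le_rfl
  have ha0le : a0 ≤ 1 := by
    by_contra hgt
    push_neg at hgt
    have hn1 : ¬ Jn (a0 - 1) := hmin _ (by omega)
    have hn2 : ¬ Jn (a0 - 2) := hmin _ (by omega)
    have hbm := hJle _ hb0
    have e1 : G.Adj (f a0) (f (a0 - 1)) ↔ ¬ G.Adj (f a0) (f (a0 - 2)) :=
      h.split (by omega) (by omega) (by omega)
    have e2 := uni (a0 - 1) (by omega) hn1 a0 m ha0 hmJ
    have e3 := uni (a0 - 2) (by omega) hn2 a0 m ha0 hmJ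
    have e4 := h.split (l := m) (j := a0 - 1) (by omega) le_rfl (by omega)
    have e5 := h.split (l := m) (j := a0 - 2) (by omega) le_rfl (by omega)
    rw [G.adj_comm (f (a0 - 1)) (f a0), G.adj_comm (f (a0 - 1)) (f m)] at e2
    rw [G.adj_comm (f (a0 - 2)) (f a0), G.adj_comm (f (a0 - 2)) (f m)] at e3
    tauto
  obtain ⟨k0, hk0m, hk0⟩ := notJ
  by_cases h0 : Jn 0
  · by_cases h1 : Jn 1
    · exfalso
      rcases Nat.eq_zero_or_pos k0 with rfl | hp
      · exact hk0 h0
      · exact hk0 (up 0 1 one_pos h0 h1 k0 hp hk0m)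
    · have e2 := uni 1 (by omega) h1 0 m h0 hmJ
      have e4 := h.split (l := m) (j := 1) (by omega) le_rfl (by omega)
      have e5 := h.split (l := m) (j := 0) (by omega) le_rfl (by omega)
      rw [G.adj_comm (f 1) (f m)] at e2
      tauto
  · have ha01 : a0 = 1 := by
      have : a0 ≠ 0 := fun he => h0 (he ▸ ha0)
      omega
    have h1 : Jn 1 := ha01 ▸ ha0
    have e2 := uni 0 (by omega) h0 1 m h1 hmJ
    rw [G.adj_comm (f 0) (f 1), G.adj_comm (f 0) (f m)] at e2
    exact e2

lemma pair_eq {a b x y : V} (ha : a ∈ ({x, y} : Set V)) (hb : b ∈ ({x, y} : Set V))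
    (hab : a ≠ b) : ({a, b} : Set V) = {x, y} := by
  simp only [Set.mem_insert_iff, Set.mem_singleton_iff] at ha hb
  rcases ha with rfl | rfl <;> rcases hb with rfl | rfl <;>
    first
      | rfl
      | exact absurd rfl hab
      | exact Set.pair_comm _ _

lemma fact_a {G : SimpleGraph V} (hprime : IsPrimeGraph G) {x y z : V}
    (hxy : x ≠ y) (hzx : z ≠ x) (hzy : z ≠ y) :
    ∃ m f, NChain G {x, y} m f ∧ f m = z := by
  classical
  set R : Set V := {u | ∃ mm ff, NChain G ({x, y} : Set V) mm ff ∧ ff mm = u} with hR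
  set X : Set V := {x, y} ∪ R with hX
  have hxX : x ∈ X := Set.mem_union_left _ (by simp)
  have hyX : y ∈ X := Set.mem_union_left _ (by simp)
  have hchainX : ∀ mm ff, NChain G ({x, y} : Set V) mm ff → ∀ i ≤ mm, ff i ∈ X := by
    intro mm ff hc i him
    rcases Nat.lt_or_ge i 2 with hi2 | hi2
    · rcases (by omega : i = 0 ∨ i = 1) with rfl | rfl
      · exact Set.mem_union_left _ hc.mem0
      · exact Set.mem_union_left _ hc.mem1
    · exact Set.mem_union_right _ ⟨i, ff, hc.pref hi2 him, rfl⟩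
  have hmod : GraphModule G X := by
    intro u hu
    by_contra hns
    push_neg at hns
    obtain ⟨⟨a, haX, hna⟩, b, hbX, hab⟩ := hns
    have huX : ∀ w, w ∈ X → u ≠ w := fun w hw he => hu (he ▸ hw)
    have hnotpair : u ∉ ({x, y} : Set V) := fun hm => hu (Set.mem_union_left _ hm)
    -- reaching u from non-uniformity on a chain
    have reachM : ∀ mm ff, NChain G ({x, y} : Set V) mm ff →
        ∀ i0 ≤ mm, ∀ j0 ≤ mm, G.Adj u (ff i0) → ¬ G.Adj u (ff j0) → u ∈ R := by
      intro mm ff hc i0 hi0 j0 hj0 hA hB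
      have hne : ∀ i ≤ mm, u ≠ ff i := fun i him => huX _ (hchainX mm ff hc i him)
      set P : ℕ → Prop := fun k => ∃ i ≤ k, ∃ j ≤ k, G.Adj u (ff i) ∧ ¬ G.Adj u (ff j)
        with hPdef
      have hPm : P (max i0 j0) := ⟨i0, le_max_left _ _, j0, le_max_right _ _, hA, hB⟩
      have hPex : ∃ k, P k := ⟨_, hPm⟩
      obtain ⟨i1, hi1, j1, hj1, hA1, hB1⟩ := Nat.find_spec hPex
      set k := Nat.find hPex with hkdef
      have hkm : k ≤ mm := le_trans (Nat.find_min' hPex hPm) (max_le hi0 hj0)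
      have hk1 : 1 ≤ k := by
        rcases Nat.eq_zero_or_pos k with h0 | h; swap
        · exact h
        · exfalso
          have hi10 : i1 = 0 := by omega
          have hj10 : j1 = 0 := by omega
          subst hi10; subst hj10
          exact hB1 hA1
      rcases eq_or_lt_of_le hk1 with hk1' | hk2
      · -- k = 1 : u splits {ff 0, ff 1} = {x,y}
        have hne01 : ff 0 ≠ ff 1 := fun he => by
          have := hc.inj 0 (by omega) 1 (by omega) he; omega
        have hpair : ({ff 0, ff 1} : Set V) = {x, y} :=
          pair_eq hc.mem0 hc.mem1 hne01
        have hu0 : u ≠ ff 0 := hne 0 (by omega)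
        have hu1 : u ≠ ff 1 := hne 1 (by omega)
        have hij : (i1 = 0 ∧ j1 = 1) ∨ (i1 = 1 ∧ j1 = 0) := by
          have : i1 ≠ j1 := fun he => hB1 (he ▸ hA1)
          omega
        have hadj : (G.Adj u (ff 0) ∧ ¬ G.Adj u (ff 1)) ∨
            (G.Adj u (ff 1) ∧ ¬ G.Adj u (ff 0)) := by
          rcases hij with ⟨he1, he2⟩ | ⟨he1, he2⟩
          · subst he1; subst he2; exact Or.inl ⟨hA1, hB1⟩
          · subst he1; subst he2; exact Or.inr ⟨hA1, hB1⟩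
        have hbase := base_chain hne01 hu0 hu1 hadj
        rw [hpair] at hbase
        exact ⟨2, _, hbase, by norm_num⟩
      · -- 2 ≤ k : extend the prefix chain of length k by u
        have hnP0 : ¬ P (k - 1) := Nat.find_min hPex (by omega)
        have hnP : ∀ i ≤ k - 1, ∀ j ≤ k - 1, G.Adj u (ff i) → G.Adj u (ff j) := by
          intro i hi j hj hA'
          by_contra hB'
          exact hnP0 ⟨i, hi, j, hj, hA', hB'⟩
        have hpre : NChain G ({x, y} : Set V) k ff := hc.pref (by omega) hkm
        by_cases hAdj0 : G.Adj u (ff 0)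
        · have hall : ∀ j < k, G.Adj u (ff j) := fun j hj =>
            hnP 0 (by omega) j (by omega) hAdj0
          have hj1k : j1 = k := by
            by_contra hne'
            exact hB1 (hall j1 (by omega))
          have hext := hpre.extend hnotpair (fun i hik => hne i (hik.trans hkm))
            (Or.inr ⟨hj1k ▸ hB1, hall⟩)
          exact ⟨k + 1, _, hext, by simp⟩
        · have hall : ∀ j < k, ¬ G.Adj u (ff j) := fun j hj hadj =>
            hAdj0 (hnP j (by omega) 0 (by omega) hadj)
          have hi1k : i1 = k := by
            by_contra hne'
            exact hall i1 (by omega) hA1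
          have hext := hpre.extend hnotpair (fun i hik => hne i (hik.trans hkm))
            (Or.inl ⟨hi1k ▸ hA1, hall⟩)
          exact ⟨k + 1, _, hext, by simp⟩
    -- case analysis on adjacency to x, y
    have hmem_adj : ∀ w, w ∈ ({x, y} : Set V) → (G.Adj u x → G.Adj u y → G.Adj u w) := by
      intro w hw h1 h2
      simp only [Set.mem_insert_iff, Set.mem_singleton_iff] at hw
      rcases hw with rfl | rfl <;> assumption
    have hmem_nadj : ∀ w, w ∈ ({x, y} : Set V) →
        (¬ G.Adj u x → ¬ G.Adj u y → ¬ G.Adj u w) := by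
      intro w hw h1 h2
      simp only [Set.mem_insert_iff, Set.mem_singleton_iff] at hw
      rcases hw with rfl | rfl <;> assumption
    have hgetR : ∀ w, w ∈ X → w ∉ ({x, y} : Set V) → w ∈ R := by
      intro w hw hnp
      rcases hw with hw | hw
      · exact absurd hw hnp
      · exact hw
    by_cases hAx : G.Adj u x <;> by_cases hAy : G.Adj u y
    · -- both adjacent: a is the non-neighbor, a ∉ {x,y}
      have haR : a ∈ R := by
        refine hgetR a haX fun hm => ?_
        exact hna (hmem_adj a hm hAx hAy)
      obtain ⟨mc, fc, hcc, hend⟩ := haR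
      have hadj0 : G.Adj u (fc 0) := hmem_adj _ hcc.mem0 hAx hAy
      exact hu (Set.mem_union_right _
        (reachM mc fc hcc 0 (Nat.zero_le _) mc le_rfl hadj0 (hend ▸ hna)))
    · -- Adj x, not y : base chain
      have : u ∈ R := by
        have hb := base_chain hxy (fun he => hu (by rw [he]; exact hxX))
          (fun he => hu (by rw [he]; exact hyX)) (Or.inl ⟨hAx, hAy⟩)
        exact ⟨2, _, hb, by norm_num⟩
      exact hu (Set.mem_union_right _ this)
    · -- Adj y, not x : base chain
      have : u ∈ R := by
        have hb := base_chain hxy (fun he => hu (by rw [he]; exact hxX))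
          (fun he => hu (by rw [he]; exact hyX)) (Or.inr ⟨hAy, hAx⟩)
        exact ⟨2, _, hb, by norm_num⟩
      exact hu (Set.mem_union_right _ this)
    · -- both non-adjacent: b is the neighbor, b ∉ {x,y}
      have hbR : b ∈ R := by
        refine hgetR b hbX fun hm => ?_
        exact (hmem_nadj b hm hAx hAy) hab
      obtain ⟨mc, fc, hcc, hend⟩ := hbR
      have hnadj0 : ¬ G.Adj u (fc 0) := hmem_nadj _ hcc.mem0 hAx hAy
      exact hu (Set.mem_union_right _
        (reachM mc fc hcc mc le_rfl 0 (Nat.zero_le _) (hend ▸ hab) hnadj0))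
  rcases hprime X hmod with hss | huniv
  · exact absurd (hss hxX hyX) hxy
  · have hzX : z ∈ X := huniv ▸ Set.mem_univ z
    rcases hzX with hz | hz
    · simp only [Set.mem_insert_iff, Set.mem_singleton_iff] at hz
      rcases hz with rfl | rfl
      · exact absurd rfl hzx
      · exact absurd rfl hzy
    · exact hz

lemma chain_d0 {G : SimpleGraph V} {I : Set V} {n : ℕ} {f : ℕ → V}
    (hg : NChain G I (n + 1) f) (hn : 3 ≤ n) :
    NChain G {f 1, f 2} n (fun i => f (i + 1)) := by
  refine ⟨by omega, ?_, ?_, ?_, ?_, ?_⟩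
  · intro i hi j hj he
    have := hg.inj (i + 1) (by omega) (j + 1) (by omega) he
    omega
  · exact Set.mem_insert _ _
  · exact Set.mem_insert_iff.mpr (Or.inr rfl)
  · intro i h2 hin hmem
    rcases Set.mem_insert_iff.mp hmem with he | he
    · have := hg.inj (i + 1) (by omega) 1 (by omega) he; omega
    · rw [Set.mem_singleton_iff] at he
      have := hg.inj (i + 1) (by omega) 2 (by omega) he; omega
  · intro i h1 hin
    rcases hg.uniq (i + 1) (by omega) (by omega) with hb | hb
    · left; intro j hj
      have e := hb (j + 1) (by omega)
      rw [e]; omega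
    · right; intro j hj
      have e := hb (j + 1) (by omega)
      rw [e]; omega

lemma chain_d1 {G : SimpleGraph V} {I : Set V} {n : ℕ} {f : ℕ → V}
    (hg : NChain G I (n + 1) f) (hn : 3 ≤ n) :
    NChain G {f 0, f 2} n (fun i => if i = 0 then f 0 else f (i + 1)) := by
  have hginj := hg.inj
  refine ⟨by omega, ?_, ?_, ?_, ?_, ?_⟩
  · intro i hi j hj he
    by_cases h1 : i = 0 <;> by_cases h2 : j = 0
    · omega
    · exfalso; rw [if_pos h1, if_neg h2] at he
      have := hginj 0 (by omega) (j + 1) (by omega) he; omega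
    · exfalso; rw [if_neg h1, if_pos h2] at he
      have := hginj (i + 1) (by omega) 0 (by omega) he; omega
    · rw [if_neg h1, if_neg h2] at he
      have := hginj (i + 1) (by omega) (j + 1) (by omega) he; omega
  · rw [if_pos rfl]; exact Set.mem_insert _ _
  · rw [if_neg (by omega)]
    exact Set.mem_insert_iff.mpr (Or.inr rfl)
  · intro i h2 hin hmem
    rw [if_neg (by omega)] at hmem
    rcases Set.mem_insert_iff.mp hmem with he | he
    · have := hginj (i + 1) (by omega) 0 (by omega) he; omega
    · rw [Set.mem_singleton_iff] at he
      have := hginj (i + 1) (by omega) 2 (by omega) he; omega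
  · intro i h1 hin
    rcases eq_or_lt_of_le h1 with he1 | hi2
    · -- i = 1
      subst he1
      by_cases hadj : G.Adj (f 2) (f 0)
      · left; intro j hj
        have hj0 : j = 0 := by omega
        subst hj0
        rw [if_pos rfl, if_neg (by omega), show (1 : ℕ) + 1 = 2 from rfl]
        exact iff_of_true hadj (by omega)
      · right; intro j hj
        have hj0 : j = 0 := by omega
        subst hj0
        rw [if_pos rfl, if_neg (by omega), show (1 : ℕ) + 1 = 2 from rfl]
        exact iff_of_true hadj (by omega)
    · -- 2 ≤ i
      rcases hg.uniq (i + 1) (by omega) (by omega) with hb | hb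
      · left; intro j hj
        rw [if_neg (by omega)]
        by_cases hj0 : j = 0
        · subst hj0
          rw [if_pos rfl]
          have e := hb 0 (by omega)
          rw [e]; omega
        · rw [if_neg hj0]
          have e := hb (j + 1) (by omega)
          rw [e]; omega
      · right; intro j hj
        rw [if_neg (by omega)]
        by_cases hj0 : j = 0
        · subst hj0
          rw [if_pos rfl]
          have e := hb 0 (by omega)
          rw [e]; omega
        · rw [if_neg hj0]
          have e := hb (j + 1) (by omega)
          rw [e]; omega

theorem statement17 [Fintype V] (G : SimpleGraph V) (n : ℕ) (hn : 3 ≤ n)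
    (hcard : 3 ≤ Fintype.card V) (hprime : IsPrimeGraph G)
    (x y z : V) (hxy : x ≠ y) (hxz : x ≠ z) (hyz : y ≠ z)
    (hnochain : ∀ m ≤ n, ∀ v : Fin (m + 1) → V, ¬ GraphChain G {x, y} z m v) :
    ∃ (I : Set V) (w : V) (v : Fin (n + 1) → V),
      GraphChain G I w n v ∧ IsPrimeGraph (G.induce (Set.range v)) := by
  classical
  obtain ⟨m0, f, hc, hfz⟩ := fact_a hprime hxy hxz.symm hyz.symm
  have hm0 : n + 1 ≤ m0 := by
    by_contra hle
    push_neg at hle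
    have hgc := hc.toGraphChain
    rw [hfz] at hgc
    exact hnochain m0 (by omega) _ hgc
  have hg : NChain G {x, y} (n + 1) f := hc.pref (by omega) hm0
  have hc0 : NChain G {f 1, f 2} n (fun i => f (i + 1)) := chain_d0 hg hn
  have hc1 : NChain G {f 0, f 2} n (fun i => if i = 0 then f 0 else f (i + 1)) :=
    chain_d1 hg hn
  by_cases hp0 : IsPrimeGraph (G.induce (Set.range
      (fun i : Fin (n + 1) => (fun i => f (i + 1)) ↑i)))
  · exact ⟨_, _, _, hc0.toGraphChain, hp0⟩
  by_cases hp1 : IsPrimeGraph (G.induce (Set.range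
      (fun i : Fin (n + 1) => (fun i => if i = 0 then f 0 else f (i + 1)) ↑i)))
  · exact ⟨_, _, _, hc1.toGraphChain, hp1⟩
  exfalso
  have e0 := lemA hc0 hn hp0
  have e1 := lemA hc1 hn hp1
  norm_num at e0 e1
  rw [if_neg (by omega : ¬ n = 0)] at e1
  -- e0 : Adj (f 2) (f 1) ↔ Adj (f (n+1)) (f 1)
  -- e1 : Adj (f 2) (f 0) ↔ Adj (f (n+1)) (f 0)
  have s1 : G.Adj (f 2) (f 1) ↔ ¬ G.Adj (f 2) (f 0) := by
    have := hg.split (l := 2) (j := 0) le_rfl (by omega) (by omega)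
    norm_num at this
    exact this
  have s2 := hg.split (l := n + 1) (j := 1) (by omega) le_rfl (by omega)
  have s3 := hg.split (l := n + 1) (j := 0) (by omega) le_rfl (by omega)
  rw [show n + 1 - 1 = n from rfl] at s2 s3
  tauto
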